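/- Let d ≥ 0 and let T_d = dickson 1 1 d ∈ ℤ[X] be the degree-d Chebyshev polynomial. Then for every natural number i with i ≤ d, the coefficient of X^i in T_d is nonzero if and only if i ≡ d (mod 2). -/
import Mathlib

open Polynomial

lemma dickson_coeff_key : ∀ d i : ℕ,
    (i ≤ d → i % 2 = d % 2 →
      0 < (-1 : ℤ) ^ ((d - i) / 2) * ((Polynomial.dickson 1 1 d : ℤ[X]).coeff i)) ∧
    (i % 2 ≠ d % 2 → (Polynomial.dickson 1 1 d : ℤ[X]).coeff i = 0) ∧
    (d < i → (Polynomial.dickson 1 1 d : ℤ[X]).coeff i = 0) := by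
  intro d
  induction d using Nat.strong_induction_on with
  | _ d ih =>
    match d with
    | 0 =>
      intro i
      have h0 : (Polynomial.dickson 1 1 0 : ℤ[X]) = C 2 := by
        rw [dickson_zero]; norm_num
      rw [h0]
      refine ⟨?_, ?_, ?_⟩
      · intro hi _
        have : i = 0 := by omega
        subst this; simp
      · intro h
        have : i ≠ 0 := by omega
        rw [coeff_C, if_neg this]
      · intro h
        have : i ≠ 0 := by omega
        rw [coeff_C, if_neg this]
    | 1 =>
      intro i
      simp only [dickson_one]
      refine ⟨?_, ?_, ?_⟩
      · intro hi hp
        have : i = 1 := by omega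
        subst this; simp
      · intro hp
        have : ¬ (1 = i) := by omega
        simp [coeff_X, this]
      · intro hi
        have : ¬ (1 = i) := by omega
        simp [coeff_X, this]
    | (n+2) =>
      intro i
      have hrec : ∀ j : ℕ, ((Polynomial.dickson 1 1 (n+2) : ℤ[X])).coeff (j+1)
          = (Polynomial.dickson 1 1 (n+1) : ℤ[X]).coeff j
            - (Polynomial.dickson 1 1 n : ℤ[X]).coeff (j+1) := by
        intro j
        rw [dickson_add_two]
        simp [coeff_X_mul]
      have hrec0 : ((Polynomial.dickson 1 1 (n+2) : ℤ[X])).coeff 0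
          = - (Polynomial.dickson 1 1 n : ℤ[X]).coeff 0 := by
        rw [dickson_add_two]
        simp
      refine ⟨?_, ?_, ?_⟩
      · intro hi hp
        rcases Nat.eq_zero_or_pos i with hi0 | hipos
        · subst hi0
          have hn : 0 % 2 = n % 2 := by omega
          have h1 := (ih n (by omega) 0).1 (by omega) hn
          rw [hrec0]
          have hK : (n + 2 - 0) / 2 = n / 2 + 1 := by omega
          rw [Nat.sub_zero] at h1
          rw [hK, pow_succ]
          nlinarith
        · obtain ⟨j, rfl⟩ : ∃ j, i = j + 1 := ⟨i - 1, by omega⟩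
          rw [hrec]
          have h1 := (ih (n+1) (by omega) j).1 (by omega) (by omega)
          rcases Nat.lt_or_ge n (j+1) with hgt | hle
          · have hj : j + 1 = n + 2 := by omega
            have h2 := (ih n (by omega) (j+1)).2.2 (by omega)
            rw [h2]
            have hK : (n + 2 - (j+1)) / 2 = 0 := by omega
            have hK' : (n + 1 - j) / 2 = 0 := by omega
            rw [hK]; rw [hK'] at h1
            simpa using h1
          · have h2 := (ih n (by omega) (j+1)).1 hle (by omega)
            have hK : (n + 2 - (j+1)) / 2 = (n - (j+1)) / 2 + 1 := by omega
            have hK2 : (n + 1 - j) / 2 = (n - (j+1)) / 2 + 1 := by omega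
            rw [hK]; rw [hK2] at h1
            rw [pow_succ] at h1 ⊢
            nlinarith
      · intro hp
        rcases Nat.eq_zero_or_pos i with hi0 | hipos
        · subst hi0
          rw [hrec0, (ih n (by omega) 0).2.1 (by omega), neg_zero]
        · obtain ⟨j, rfl⟩ : ∃ j, i = j + 1 := ⟨i - 1, by omega⟩
          rw [hrec, (ih (n+1) (by omega) j).2.1 (by omega),
            (ih n (by omega) (j+1)).2.1 (by omega), sub_zero]
      · intro hi
        obtain ⟨j, rfl⟩ : ∃ j, i = j + 1 := ⟨i - 1, by omega⟩
        rw [hrec, (ih (n+1) (by omega) j).2.2 (by omega),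
          (ih n (by omega) (j+1)).2.2 (by omega), sub_zero]

theorem chebyshev_coeff_ne_zero_iff (d : ℕ) :
    ∀ i ≤ d, ((Polynomial.dickson 1 1 d : ℤ[X]).coeff i ≠ 0 ↔ i ≡ d [MOD 2]) := by
  intro i hi
  have h := dickson_coeff_key d i
  constructor
  · intro hne
    by_contra hp
    exact hne (h.2.1 (by simpa [Nat.ModEq] using hp))
  · intro hp
    have := h.1 hi (by simpa [Nat.ModEq] using hp)
    intro h0
    rw [h0, mul_zero] at this
    exact lt_irrefl 0 this
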